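/- Let n ≥ 1, let F and G_1,…,G_m be cdfs, let 𝒰, ϑ : [0,1]^m → ℝ and μ_j, ℓ_j, m_j, ν_j : [0,1]^m → EReal (j = 1,…,n) be arbitrary functions, and define H(x) = 𝒰(·)(x)·Σ_{j=1}^n (F̄(μ_j(·)(x)) − F̄(ℓ_j(·)(x))) − ϑ(·)(x)·Σ_{j=1}^n (F̄(ν_j(·)(x)) − F̄(m_j(·)(x))), where (·)(x) = (G_1(x),…,G_m(x)). If the support S_{G_j} is countable for every j = 1,…,m, then the support S_H is countable. -/

import Mathlib

open Filter Topology Set BigOperators unitInterval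

/-- A cumulative distribution function: non-decreasing, right-continuous,
tending to 0 at `-∞` and to 1 at `+∞`. -/
def IsCDF (F : ℝ → ℝ) : Prop :=
  Monotone F ∧ (∀ x : ℝ, ContinuousWithinAt F (Set.Ici x) x) ∧
    Tendsto F atBot (nhds 0) ∧ Tendsto F atTop (nhds 1)

/-- The extension of a cdf to the extended reals, with value 0 at `⊥` and 1 at `⊤`. -/
noncomputable def extCDF (F : ℝ → ℝ) (a : EReal) : ℝ :=
  if a = ⊥ then 0 else if a = ⊤ then 1 else F a.toReal

/-- The support of a function `F : ℝ → ℝ`: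
`S_F = {x | F(x) − F(x − ε) > 0 for every ε > 0}`. -/
def cdfSupport (F : ℝ → ℝ) : Set ℝ :=
  {x | ∀ ε > (0 : ℝ), 0 < F x - F (x - ε)}

/-- Corollary 3.1: discrete baselines generate discrete distributions: if every
`S_{G_j}` is countable then `S_H` is countable. -/
theorem stmt_10
    (n m : ℕ) (hn : 1 ≤ n)
    (F : ℝ → ℝ) (hF : IsCDF F)
    (G : Fin m → ℝ → ℝ) (hG : ∀ i, IsCDF (G i))
    (hG01 : ∀ i (x : ℝ), G i x ∈ unitInterval)
    (𝒰 ϑ : (Fin m → unitInterval) → ℝ)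
    (μ ℓ mm ν : Fin n → (Fin m → unitInterval) → EReal)
    (hGc : ∀ i, (cdfSupport (G i)).Countable) :
    (cdfSupport (fun x =>
      𝒰 (fun i => ⟨G i x, hG01 i x⟩) *
          ∑ j, (extCDF F (μ j (fun i => ⟨G i x, hG01 i x⟩))
            - extCDF F (ℓ j (fun i => ⟨G i x, hG01 i x⟩)))
        - ϑ (fun i => ⟨G i x, hG01 i x⟩) *
          ∑ j, (extCDF F (ν j (fun i => ⟨G i x, hG01 i x⟩))
            - extCDF F (mm j (fun i => ⟨G i x, hG01 i x⟩))))
      ).Countable := by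
  apply Set.Countable.mono ?_ (Set.countable_iUnion hGc)
  intro x hx
  by_contra hcon
  simp only [Set.mem_iUnion, not_exists, cdfSupport, Set.mem_setOf_eq, not_forall, not_lt] at hcon
  choose εf hεpos hεle using hcon
  -- constant values
  have hconst : ∀ i, G i (x - εf i) = G i x := fun i =>
    le_antisymm ((hG i).1 (by linarith [hεpos i])) (by linarith [hεle i])
  set ε : ℝ := Finset.univ.inf' ⟨0, Finset.mem_univ 0⟩ (Fin.cases 1 εf : Fin (m+1) → ℝ) with hε
  have hεpos' : 0 < ε := by
    rw [hε]; refine (Finset.lt_inf'_iff _).2 ?_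
    intro i _
    induction i using Fin.cases with
    | zero => norm_num
    | succ j => simpa using hεpos j
  have hεle' : ∀ i, ε ≤ εf i := fun i =>
    Finset.inf'_le _ (Finset.mem_univ (Fin.succ i))
  have hconst' : ∀ i, G i (x - ε) = G i x := fun i =>
    le_antisymm ((hG i).1 (by linarith)) (by rw [← hconst i]; exact (hG i).1 (by linarith [hεle' i]))
  have heq : (fun i => (⟨G i (x - ε), hG01 i (x - ε)⟩ : unitInterval)) =
      (fun i => (⟨G i x, hG01 i x⟩ : unitInterval)) := by
    funext i; exact Subtype.ext (hconst' i)
  have := hx ε hεpos'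
  simp only [heq] at this
  linarith
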